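/- Let F be a real n×p matrix and let k ≥ 1 be an even integer with 2.5k ≤ p satisfying δ_{1.5k} + θ_{k,1.5k} < 1. Let β ∈ ℝ^p be a k-sparse vector and y = Fβ + z where ‖Fᵀz‖_∞ ≤ λ for some λ ≥ 0. If β̂ is a minimizer of ‖γ‖₁ over all γ ∈ ℝ^p with ‖Fᵀ(y − Fγ)‖_∞ ≤ λ, then ‖β̂ − β‖₂ ≤ C₁ √k λ, where C₁ = 2√3 / (1 − δ_{1.5k} − θ_{k,1.5k}). -/

import Mathlib

/-- A vector `v ∈ ℝ^p` is `k`-sparse if it has at most `k` nonzero entries. -/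
def IsSparse {p : ℕ} (k : ℕ) (v : Fin p → ℝ) : Prop :=
  ∃ s : Finset (Fin p), s.card ≤ k ∧ ∀ i ∉ s, v i = 0

/-- The ℓ₂ norm of a vector in `ℝ^m`. -/
noncomputable def l2norm {m : ℕ} (v : Fin m → ℝ) : ℝ :=
  Real.sqrt (∑ i, v i ^ 2)

/-- The ℓ₁ norm of a vector in `ℝ^m`. -/
def l1norm {m : ℕ} (v : Fin m → ℝ) : ℝ := ∑ i, |v i|

/-- The `k`-restricted isometry constant `δ_k` of `F`: the smallest `δ` such that
`√(1-δ)‖c‖₂ ≤ ‖Fc‖₂ ≤ √(1+δ)‖c‖₂` for every `k`-sparse vector `c`. -/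
noncomputable def ripConst {n p : ℕ} (F : Matrix (Fin n) (Fin p) ℝ) (k : ℕ) : ℝ :=
  sInf {δ : ℝ | ∀ c : Fin p → ℝ, IsSparse k c →
    Real.sqrt (1 - δ) * l2norm c ≤ l2norm (F.mulVec c) ∧
    l2norm (F.mulVec c) ≤ Real.sqrt (1 + δ) * l2norm c}

/-- The `(k,k')`-restricted orthogonality constant `θ_{k,k'}` of `F`: the smallest `θ` such
that `|⟨Fc, Fc'⟩| ≤ θ‖c‖₂‖c'‖₂` for all `k`-sparse `c` and `k'`-sparse `c'` with disjoint
supports. -/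
noncomputable def roConst {n p : ℕ} (F : Matrix (Fin n) (Fin p) ℝ) (k k' : ℕ) : ℝ :=
  sInf {θ : ℝ | ∀ c c' : Fin p → ℝ, IsSparse k c → IsSparse k' c' →
    (∀ i, c i = 0 ∨ c' i = 0) →
    |∑ i, F.mulVec c i * F.mulVec c' i| ≤ θ * (l2norm c * l2norm c')}

open Finset

namespace DSaux

noncomputable def ip {n : ℕ} (x y : Fin n → ℝ) : ℝ := ∑ i, x i * y i

lemma l2norm_nonneg {m : ℕ} (v : Fin m → ℝ) : 0 ≤ l2norm v := Real.sqrt_nonneg _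

lemma l2norm_sq {m : ℕ} (v : Fin m → ℝ) : l2norm v ^ 2 = ∑ i, v i ^ 2 := by
  rw [l2norm, Real.sq_sqrt (by positivity)]

lemma abs_ip_le {n : ℕ} (x y : Fin n → ℝ) : |ip x y| ≤ l2norm x * l2norm y := by
  have h := Finset.sum_mul_sq_le_sq_mul_sq univ x y
  have h2 : |ip x y| ^ 2 ≤ (l2norm x * l2norm y) ^ 2 := by
    rw [sq_abs, mul_pow, l2norm_sq, l2norm_sq]; exact h
  have := Real.sqrt_le_sqrt h2
  rwa [Real.sqrt_sq (abs_nonneg _), Real.sqrt_sq (mul_nonneg (l2norm_nonneg x) (l2norm_nonneg y))] at this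
  
lemma ip_le {n : ℕ} (x y : Fin n → ℝ) : ip x y ≤ l2norm x * l2norm y :=
  (le_abs_self _).trans (abs_ip_le x y)

lemma l2norm_add_le {m : ℕ} (x y : Fin m → ℝ) :
    l2norm (fun i => x i + y i) ≤ l2norm x + l2norm y := by
  have h1 : (∑ i, (x i + y i) ^ 2) ≤ (l2norm x + l2norm y) ^ 2 := by
    have hs : ∑ i, (x i + y i) ^ 2 = (∑ i, x i ^ 2) + 2 * ip x y + ∑ i, y i ^ 2 := by
      simp only [ip, ← Finset.sum_add_distrib, ← Finset.mul_sum]; rw [Finset.sum_congr rfl (fun i _ => by ring : ∀ i ∈ univ, (x i + y i)^2 = (x i ^2 + 2*(x i * y i) + y i ^2)), Finset.sum_add_distrib, Finset.sum_add_distrib, Finset.mul_sum]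
    have := ip_le x y
    have hx := l2norm_sq x
    have hy := l2norm_sq y
    nlinarith [l2norm_nonneg x, l2norm_nonneg y]
  have h2 := Real.sqrt_le_sqrt h1
  rwa [Real.sqrt_sq (add_nonneg (l2norm_nonneg x) (l2norm_nonneg y))] at h2
  
lemma l2norm_zero {m : ℕ} : l2norm (fun _ : Fin m => (0:ℝ)) = 0 := by
  simp [l2norm]

lemma l2norm_sum_le {m : ℕ} {ι : Type*} (s : Finset ι) (u : ι → Fin m → ℝ) :
    l2norm (fun i => ∑ j ∈ s, u j i) ≤ ∑ j ∈ s, l2norm (u j) := by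
  classical
  induction s using Finset.cons_induction with
  | empty => simp [l2norm_zero]
  | cons a s ha ih =>
      rw [Finset.sum_cons]
      have he : (fun i => ∑ j ∈ Finset.cons a s ha, u j i)
          = fun i => u a i + ∑ j ∈ s, u j i := by
        funext i; rw [Finset.sum_cons]
      rw [he]
      exact (l2norm_add_le _ _).trans (add_le_add_right ih _)

lemma sum_abs_le_sqrt_card {p : ℕ} (S : Finset (Fin p)) (v : Fin p → ℝ)
    (hv : ∀ i ∉ S, v i = 0) : l1norm v ≤ Real.sqrt S.card * l2norm v := by
  have h0 : l1norm v = ∑ i ∈ S, |v i| := by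
    rw [l1norm, ← Finset.sum_subset (Finset.subset_univ S)]
    intro x _ hx; rw [hv x hx, abs_zero]
  have h1 : (∑ i ∈ S, |v i|) ^ 2 ≤ (S.card : ℝ) * ∑ i, v i ^ 2 := by
    have := Finset.sum_mul_sq_le_sq_mul_sq S (fun i => |v i|) (fun _ => (1:ℝ))
    simp only [mul_one, one_pow, Finset.sum_const, nsmul_eq_mul, sq_abs] at this
    calc (∑ i ∈ S, |v i|) ^ 2 ≤ (∑ i ∈ S, v i ^ 2) * S.card := this
      _ ≤ (S.card : ℝ) * ∑ i, v i ^ 2 := by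
          rw [mul_comm]
          refine mul_le_mul_of_nonneg_left ?_ (Nat.cast_nonneg _)
          exact Finset.sum_le_sum_of_subset_of_nonneg (Finset.subset_univ S)
            (fun i _ _ => sq_nonneg _)
  have h2 : (∑ i ∈ S, |v i|) ≤ Real.sqrt ((S.card : ℝ) * ∑ i, v i ^ 2) := by
    rw [← Real.sqrt_sq (Finset.sum_nonneg fun i _ => abs_nonneg _)]
    exact Real.sqrt_le_sqrt h1
  rw [h0]
  refine h2.trans (le_of_eq ?_)
  rw [Real.sqrt_mul (Nat.cast_nonneg _), l2norm]

def frob2 {n p : ℕ} (F : Matrix (Fin n) (Fin p) ℝ) : ℝ := ∑ i, ∑ j, (F i j) ^ 2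

lemma frob2_nonneg {n p : ℕ} (F : Matrix (Fin n) (Fin p) ℝ) : 0 ≤ frob2 F := by
  refine Finset.sum_nonneg fun i _ => Finset.sum_nonneg fun j _ => sq_nonneg _

lemma mulVec_l2_le {n p : ℕ} (F : Matrix (Fin n) (Fin p) ℝ) (c : Fin p → ℝ) :
    l2norm (F.mulVec c) ≤ Real.sqrt (frob2 F) * l2norm c := by
  have hrow : ∀ i, (F.mulVec c i) ^ 2 ≤ (∑ j, F i j ^ 2) * ∑ j, c j ^ 2 := by
    intro i
    have : F.mulVec c i = ∑ j, F i j * c j := by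
      simp [Matrix.mulVec, dotProduct]
    rw [this]
    exact Finset.sum_mul_sq_le_sq_mul_sq univ _ _
  have h1 : (∑ i, F.mulVec c i ^ 2) ≤ frob2 F * ∑ j, c j ^ 2 := by
    rw [frob2, Finset.sum_mul]
    exact Finset.sum_le_sum fun i _ => hrow i
  rw [l2norm, l2norm]
  refine (Real.sqrt_le_sqrt h1).trans (le_of_eq ?_)
  rw [Real.sqrt_mul (frob2_nonneg F)]

lemma single_sparse {p k : ℕ} (hk : 1 ≤ k) (i₀ : Fin p) :
    IsSparse k (Pi.single i₀ (1:ℝ)) := by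
  refine ⟨{i₀}, by simpa using hk, fun i hi => ?_⟩
  exact Pi.single_eq_of_ne (by simpa using hi) 1

lemma l2norm_single {p : ℕ} (i₀ : Fin p) : l2norm (Pi.single i₀ (1:ℝ)) = 1 := by
  have h : (∑ i, (Pi.single i₀ (1:ℝ) i) ^ 2) = (1:ℝ) := by
    rw [Finset.sum_eq_single i₀
      (fun b _ hb => by simp [Pi.single_eq_of_ne hb])
      (fun h => absurd (mem_univ i₀) h)]
    simp
  rw [l2norm, h, Real.sqrt_one]

lemma ripConst_spec {n p : ℕ} (F : Matrix (Fin n) (Fin p) ℝ) {k : ℕ}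
    (hp : 0 < p) (hk : 1 ≤ k) :
    ∀ c : Fin p → ℝ, IsSparse k c →
      Real.sqrt (1 - ripConst F k) * l2norm c ≤ l2norm (F.mulVec c) ∧
      l2norm (F.mulVec c) ≤ Real.sqrt (1 + ripConst F k) * l2norm c := by
  set S := {δ : ℝ | ∀ c : Fin p → ℝ, IsSparse k c →
    Real.sqrt (1 - δ) * l2norm c ≤ l2norm (F.mulVec c) ∧
    l2norm (F.mulVec c) ≤ Real.sqrt (1 + δ) * l2norm c} with hS
  have hclosed : IsClosed S := by
    have : S = ⋂ (c : Fin p → ℝ) (_ : IsSparse k c),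
        ({δ : ℝ | Real.sqrt (1 - δ) * l2norm c ≤ l2norm (F.mulVec c)} ∩
         {δ : ℝ | l2norm (F.mulVec c) ≤ Real.sqrt (1 + δ) * l2norm c}) := by
      ext δ
      simp only [hS, Set.mem_setOf_eq, Set.mem_iInter, Set.mem_inter_iff]
    rw [this]
    refine isClosed_iInter fun c => isClosed_iInter fun _ => IsClosed.inter ?_ ?_
    · exact isClosed_le (((Real.continuous_sqrt).comp
        (continuous_const.sub continuous_id)).mul continuous_const) continuous_const
    · exact isClosed_le continuous_const (((Real.continuous_sqrt).comp
        (continuous_const.add continuous_id)).mul continuous_const)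
  have hne : S.Nonempty := by
    refine ⟨1 + frob2 F, fun c _ => ⟨?_, ?_⟩⟩
    · have : Real.sqrt (1 - (1 + frob2 F)) = 0 := by
        rw [Real.sqrt_eq_zero']
        linarith [frob2_nonneg F]
      rw [this, zero_mul]; exact l2norm_nonneg _
    · refine (mulVec_l2_le F c).trans ?_
      refine mul_le_mul_of_nonneg_right ?_ (l2norm_nonneg _)
      exact Real.sqrt_le_sqrt (by linarith)
  have hbdd : BddBelow S := by
    refine ⟨-(frob2 F), fun δ hδ => ?_⟩
    have hc := hδ (Pi.single ⟨0, hp⟩ (1:ℝ)) (single_sparse hk _)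
    rw [l2norm_single] at hc
    have hub : Real.sqrt (1 - δ) ≤ Real.sqrt (frob2 F) := by
      calc Real.sqrt (1 - δ) = Real.sqrt (1 - δ) * 1 := (mul_one _).symm
        _ ≤ l2norm (F.mulVec (Pi.single ⟨0, hp⟩ (1:ℝ))) := hc.1
        _ ≤ Real.sqrt (frob2 F) * 1 := by
            simpa [l2norm_single] using mulVec_l2_le F (Pi.single ⟨0, hp⟩ (1:ℝ))
        _ = Real.sqrt (frob2 F) := mul_one _
    rcases le_or_gt (1 - δ) 0 with h | h
    · linarith [frob2_nonneg F]
    · have : 1 - δ ≤ frob2 F := by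
        have := Real.sqrt_le_sqrt (le_of_lt h)
        nlinarith [Real.sq_sqrt (le_of_lt h), Real.sq_sqrt (frob2_nonneg F),
          Real.sqrt_nonneg (1 - δ), Real.sqrt_nonneg (frob2 F), hub]
      linarith
  have := IsClosed.csInf_mem hclosed hne hbdd
  exact this

lemma roConst_spec {n p : ℕ} (F : Matrix (Fin n) (Fin p) ℝ) {k k' : ℕ}
    (hp : 2 ≤ p) (hk : 1 ≤ k) (hk' : 1 ≤ k') :
    ∀ c c' : Fin p → ℝ, IsSparse k c → IsSparse k' c' →
      (∀ i, c i = 0 ∨ c' i = 0) →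
      |∑ i, F.mulVec c i * F.mulVec c' i| ≤ roConst F k k' * (l2norm c * l2norm c') := by
  set S := {θ : ℝ | ∀ c c' : Fin p → ℝ, IsSparse k c → IsSparse k' c' →
    (∀ i, c i = 0 ∨ c' i = 0) →
    |∑ i, F.mulVec c i * F.mulVec c' i| ≤ θ * (l2norm c * l2norm c')} with hS
  have hclosed : IsClosed S := by
    have : S = ⋂ (c : Fin p → ℝ) (c' : Fin p → ℝ) (_ : IsSparse k c)
        (_ : IsSparse k' c') (_ : ∀ i, c i = 0 ∨ c' i = 0),
        {θ : ℝ | |∑ i, F.mulVec c i * F.mulVec c' i| ≤ θ * (l2norm c * l2norm c')} := by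
      ext θ
      simp only [hS, Set.mem_setOf_eq, Set.mem_iInter]
    rw [this]
    refine isClosed_iInter fun c => isClosed_iInter fun c' => isClosed_iInter fun _ =>
      isClosed_iInter fun _ => isClosed_iInter fun _ => ?_
    exact isClosed_le continuous_const (continuous_id.mul continuous_const)
  have hne : S.Nonempty := by
    refine ⟨frob2 F, fun c c' _ _ _ => ?_⟩
    calc |∑ i, F.mulVec c i * F.mulVec c' i| ≤ l2norm (F.mulVec c) * l2norm (F.mulVec c') :=
          abs_ip_le _ _
      _ ≤ (Real.sqrt (frob2 F) * l2norm c) * (Real.sqrt (frob2 F) * l2norm c') := by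
          exact mul_le_mul (mulVec_l2_le F c) (mulVec_l2_le F c') (l2norm_nonneg _)
            (mul_nonneg (Real.sqrt_nonneg _) (l2norm_nonneg _))
      _ = frob2 F * (l2norm c * l2norm c') := by
          rw [show (Real.sqrt (frob2 F) * l2norm c) * (Real.sqrt (frob2 F) * l2norm c')
            = (Real.sqrt (frob2 F) * Real.sqrt (frob2 F)) * (l2norm c * l2norm c') from by
              ring, Real.mul_self_sqrt (frob2_nonneg F)]
  have hbdd : BddBelow S := by
    refine ⟨0, fun θ hθ => ?_⟩
    have h01 : (⟨0, by omega⟩ : Fin p) ≠ ⟨1, by omega⟩ := by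
      intro h; simpa using congrArg Fin.val h
    have hc := hθ (Pi.single ⟨0, by omega⟩ (1:ℝ)) (Pi.single ⟨1, by omega⟩ (1:ℝ))
      (single_sparse hk _) (single_sparse hk' _) ?_
    · rw [l2norm_single, l2norm_single, mul_one, mul_one] at hc
      exact le_trans (abs_nonneg _) hc
    · intro i
      rcases eq_or_ne i (⟨0, by omega⟩ : Fin p) with h | h
      · right; rw [h]; exact Pi.single_eq_of_ne h01 1
      · left; exact Pi.single_eq_of_ne h 1
  exact IsClosed.csInf_mem hclosed hne hbdd

lemma shift_lemma (a : ℕ → ℝ) (ha : ∀ t, 0 ≤ a t) (hmono : ∀ s t, s ≤ t → a t ≤ a s)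
    (m s : ℕ) (hm : 1 ≤ m) :
    ∑ t ∈ Finset.Ico (s + m) (s + 3 * m), a t ^ 2
      ≤ (∑ t ∈ Finset.Ico s (s + 2 * m), a t) ^ 2 / (2 * m) := by
  set u := a (s + m) with hu_def
  set B := ∑ t ∈ Finset.Ico (s + m) (s + 2 * m), a t with hB_def
  set S := ∑ t ∈ Finset.Ico s (s + 2 * m), a t with hS_def
  set T := ∑ t ∈ Finset.Ico (s + 2 * m) (s + 3 * m), a t with hT_def
  have hu : 0 ≤ u := ha _
  have hB : 0 ≤ B := Finset.sum_nonneg fun t _ => ha t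
  have hS0 : 0 ≤ S := Finset.sum_nonneg fun t _ => ha t
  have h1 : ∑ t ∈ Finset.Ico (s + m) (s + 3 * m), a t ^ 2
      ≤ u * ∑ t ∈ Finset.Ico (s + m) (s + 3 * m), a t := by
    rw [Finset.mul_sum]
    refine Finset.sum_le_sum fun t ht => ?_
    have h := hmono (s + m) t (Finset.mem_Ico.mp ht).1
    have := ha t
    nlinarith
  have h2 : ∑ t ∈ Finset.Ico (s + m) (s + 3 * m), a t = B + T := by
    rw [hB_def, hT_def,
      Finset.sum_Ico_consecutive _ (by omega : s + m ≤ s + 2 * m) (by omega : s + 2 * m ≤ s + 3 * m)]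
  have h3 : T ≤ B := by
    have l : T = ∑ i ∈ Finset.range m, a (s + 2 * m + i) := by
      rw [hT_def, Finset.sum_Ico_eq_sum_range, show s + 3 * m - (s + 2 * m) = m from by omega]
    have r : B = ∑ i ∈ Finset.range m, a (s + m + i) := by
      rw [hB_def, Finset.sum_Ico_eq_sum_range, show s + 2 * m - (s + m) = m from by omega]
    rw [l, r]
    exact Finset.sum_le_sum fun i _ => hmono _ _ (by omega)
  have h4 : (m : ℝ) * u + B ≤ S := by
    rw [hS_def, ← Finset.sum_Ico_consecutive _ (by omega : s ≤ s + m) (by omega : s + m ≤ s + 2 * m)]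
    have hmu : (m : ℝ) * u ≤ ∑ t ∈ Finset.Ico s (s + m), a t := by
      have : (m : ℝ) * u = ∑ _t ∈ Finset.Ico s (s + m), u := by
        rw [Finset.sum_const, Nat.card_Ico, nsmul_eq_mul, show s + m - s = m from by omega]
      rw [this]
      exact Finset.sum_le_sum fun t ht => hmono t (s + m) (le_of_lt (Finset.mem_Ico.mp ht).2)
    linarith
  have hA : ∑ t ∈ Finset.Ico (s + m) (s + 3 * m), a t ^ 2 ≤ 2 * u * B := by
    rw [h2] at h1
    nlinarith [mul_le_mul_of_nonneg_left h3 hu]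
  have hBsq : 4 * (m : ℝ) * u * B ≤ ((m : ℝ) * u + B) ^ 2 := by
    nlinarith [sq_nonneg ((m : ℝ) * u - B)]
  have hCsq : ((m : ℝ) * u + B) ^ 2 ≤ S ^ 2 := by
    have h0 : (0:ℝ) ≤ (m : ℝ) * u + B := by positivity
    nlinarith
  have hmr : (0 : ℝ) < 2 * m := by
    have : (1:ℝ) ≤ (m:ℝ) := by exact_mod_cast hm
    linarith
  rw [le_div_iff₀ hmr]
  calc (∑ t ∈ Finset.Ico (s + m) (s + 3 * m), a t ^ 2) * (2 * m) ≤ (2 * u * B) * (2 * m) := by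
        refine mul_le_mul_of_nonneg_right hA (le_of_lt hmr)
    _ = 4 * (m : ℝ) * u * B := by ring
    _ ≤ ((m : ℝ) * u + B) ^ 2 := hBsq
    _ ≤ S ^ 2 := hCsq

noncomputable def restr {p : ℕ} (Q : Finset (Fin p)) (v : Fin p → ℝ) : Fin p → ℝ :=
  fun i => if i ∈ Q then v i else 0

lemma restr_sparse {p k : ℕ} (Q : Finset (Fin p)) (v : Fin p → ℝ) (hk : Q.card ≤ k) :
    IsSparse k (restr Q v) := ⟨Q, hk, fun i hi => if_neg hi⟩

lemma l2norm_sq_restr {p : ℕ} (Q : Finset (Fin p)) (v : Fin p → ℝ) :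
    l2norm (restr Q v) ^ 2 = ∑ i ∈ Q, v i ^ 2 := by
  rw [l2norm_sq]
  have : ∀ i, (restr Q v i) ^ 2 = if i ∈ Q then v i ^ 2 else 0 := by
    intro i; rw [restr]; split <;> simp
  rw [Finset.sum_congr rfl fun i _ => this i, Finset.sum_ite_mem, Finset.univ_inter]

lemma l2norm_restr_mono {p : ℕ} {Q R : Finset (Fin p)} (v : Fin p → ℝ) (hQR : Q ⊆ R) :
    l2norm (restr Q v) ≤ l2norm (restr R v) := by
  have h1 : l2norm (restr Q v) ^ 2 ≤ l2norm (restr R v) ^ 2 := by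
    rw [l2norm_sq_restr, l2norm_sq_restr]
    exact Finset.sum_le_sum_of_subset_of_nonneg hQR fun i _ _ => sq_nonneg _
  have := Real.sqrt_le_sqrt h1
  rwa [Real.sqrt_sq (l2norm_nonneg _), Real.sqrt_sq (l2norm_nonneg _)] at this

lemma sum_blocks (a : ℕ → ℝ) (L J : ℕ) :
    ∑ j ∈ Finset.range J, ∑ t ∈ Finset.Ico (L * j) (L * j + L), a t
      = ∑ t ∈ Finset.Ico 0 (L * J), a t := by
  induction J with
  | zero => simp
  | succ J ih =>
      rw [Finset.sum_range_succ, ih,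
        Finset.sum_Ico_consecutive _ (Nat.zero_le _) (Nat.le_add_right _ _),
        show L * J + L = L * (J + 1) from by ring]

lemma ip_mulVec_left {n p : ℕ} (F : Matrix (Fin n) (Fin p) ℝ) (x : Fin p → ℝ)
    (v : Fin n → ℝ) : ip (F.mulVec x) v = ∑ j, x j * ∑ i, F i j * v i := by
  rw [ip]
  simp only [Matrix.mulVec, dotProduct, Finset.sum_mul]
  rw [Finset.sum_comm]
  exact Finset.sum_congr rfl fun j _ => by
    rw [Finset.mul_sum]; exact Finset.sum_congr rfl fun i _ => by ring

lemma ip_comm {n : ℕ} (x y : Fin n → ℝ) : ip x y = ip y x := by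
  rw [ip, ip]; exact Finset.sum_congr rfl fun i _ => mul_comm _ _

lemma ip_self {n : ℕ} (x : Fin n → ℝ) : ip x x = l2norm x ^ 2 := by
  rw [ip, l2norm_sq]; exact Finset.sum_congr rfl fun i _ => (sq (x i)).symm ▸ by ring

lemma roConst_nonneg {n p : ℕ} (F : Matrix (Fin n) (Fin p) ℝ) {k k' : ℕ}
    (hp : 2 ≤ p) (hk : 1 ≤ k) (hk' : 1 ≤ k') : 0 ≤ roConst F k k' := by
  have h01 : (⟨0, by omega⟩ : Fin p) ≠ ⟨1, by omega⟩ := by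
    intro h; simpa using congrArg Fin.val h
  have hc := roConst_spec F hp hk hk' (Pi.single ⟨0, by omega⟩ (1:ℝ))
    (Pi.single ⟨1, by omega⟩ (1:ℝ)) (single_sparse hk _) (single_sparse hk' _) ?_
  · rw [l2norm_single, l2norm_single, mul_one, mul_one] at hc
    exact le_trans (abs_nonneg _) hc
  · intro i
    rcases eq_or_ne i (⟨0, by omega⟩ : Fin p) with h | h
    · right; rw [h]; exact Pi.single_eq_of_ne h01 1
    · left; exact Pi.single_eq_of_ne h 1

lemma transpose_mulVec_apply {n p : ℕ} (F : Matrix (Fin n) (Fin p) ℝ) (v : Fin n → ℝ)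
    (j : Fin p) : (Matrix.transpose F).mulVec v j = ∑ i, F i j * v i := by
  simp [Matrix.mulVec, dotProduct, Matrix.transpose_apply]

lemma core {n p m : ℕ} (F : Matrix (Fin n) (Fin p) ℝ) (hm : 1 ≤ m) (hp : 5 * m ≤ p)
    (δ θ lam : ℝ) (hlam : 0 ≤ lam) (hdt : δ + θ < 1) (hθnn : 0 ≤ θ)
    (hδ : ∀ c : Fin p → ℝ, IsSparse (3 * m) c →
      Real.sqrt (1 - δ) * l2norm c ≤ l2norm (F.mulVec c))
    (hθ : ∀ c c' : Fin p → ℝ, IsSparse (2 * m) c → IsSparse (3 * m) c' →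
      (∀ i, c i = 0 ∨ c' i = 0) →
      |ip (F.mulVec c) (F.mulVec c')| ≤ θ * (l2norm c * l2norm c'))
    (h : Fin p → ℝ) (T0 : Finset (Fin p)) (hT0card : T0.card = 2 * m)
    (hcone : ∑ i ∈ T0ᶜ, |h i| ≤ ∑ i ∈ T0, |h i|)
    (hcorr : ∀ j : Fin p, |∑ i, F i j * F.mulVec h i| ≤ 2 * lam) :
    l2norm h ≤ 2 * Real.sqrt 3 / (1 - δ - θ) * Real.sqrt (2 * m) * lam := by
  classical
  have hdtpos : 0 < 1 - δ - θ := by linarith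
  set N := p - 2 * m with hN_def
  have hNc : T0ᶜ.card = N := by
    rw [Finset.card_compl, hT0card, Fintype.card_fin]
  have hN3 : 3 * m ≤ N := by omega
  -- the decreasing enumeration of T0ᶜ
  let e := T0ᶜ.orderIsoOfFin hNc
  let f : Fin N → ℝ := fun t => -|h ((e t) : Fin p)|
  let σ := Tuple.sort f
  set w : Fin N → Fin p := fun t => ((e (σ t)) : Fin p) with hw_def
  have hwinj : Function.Injective w := by
    intro t t' htt
    have : e (σ t) = e (σ t') := Subtype.coe_injective htt
    exact σ.injective (e.injective this)
  have hwmem : ∀ t, w t ∈ T0ᶜ := fun t => (e (σ t)).2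
  have hwsurj : ∀ i ∈ T0ᶜ, ∃ t, w t = i := by
    intro i hi
    refine ⟨σ.symm (e.symm ⟨i, hi⟩), ?_⟩
    simp only [hw_def, Equiv.apply_symm_apply, OrderIso.apply_symm_apply]
  have hwanti : ∀ t t' : Fin N, t ≤ t' → |h (w t')| ≤ |h (w t)| := by
    intro t t' htt
    have := Tuple.monotone_sort f htt
    simp only [Function.comp_apply, f] at this
    have h2 : -|h ((e (σ t)) : Fin p)| ≤ -|h ((e (σ t')) : Fin p)| := this
    simpa [hw_def] using neg_le_neg_iff.mp h2
  -- zero-extended decreasing sequence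
  set a : ℕ → ℝ := fun t => if ht : t < N then |h (w ⟨t, ht⟩)| else 0 with ha_def
  have ha : ∀ t, 0 ≤ a t := by
    intro t; rw [ha_def]; dsimp only; split
    · exact abs_nonneg _
    · exact le_refl 0
  have hamono : ∀ s t : ℕ, s ≤ t → a t ≤ a s := by
    intro s t hst
    rcases lt_or_ge t N with ht | ht
    · have hs : s < N := lt_of_le_of_lt hst ht
      rw [ha_def]; dsimp only; rw [dif_pos ht, dif_pos hs]
      exact hwanti ⟨s, hs⟩ ⟨t, ht⟩ hst
    · have : a t = 0 := by rw [ha_def]; dsimp only; rw [dif_neg (not_lt.mpr ht)]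
      rw [this]; exact ha s
  have haval : ∀ t : Fin N, a ↑t = |h (w t)| := by
    intro t; rw [ha_def]; dsimp only; rw [dif_pos t.isLt]
  -- index sets
  set W1 : Finset (Fin p) := (Finset.univ.filter (fun t : Fin N => (t : ℕ) < m)).image w
    with hW1_def
  set T01 : Finset (Fin p) := T0 ∪ W1 with hT01_def
  set Sb : ℕ → Finset (Fin p) := fun j =>
    (Finset.univ.filter (fun t : Fin N =>
      m + 2 * m * j ≤ (t : ℕ) ∧ (t : ℕ) < m + 2 * m * j + 2 * m)).image w with hSb_def
  set h1 : Fin p → ℝ := restr T01 h with hh1_def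
  set u : ℕ → Fin p → ℝ := fun j => restr (Sb j) h with hu_def
  -- membership in Sb j forces position ≥ m, hence not in T01
  have hSbT01 : ∀ j, ∀ i ∈ Sb j, i ∉ T01 := by
    intro j i hi hiT
    obtain ⟨t, htf, hwt⟩ := Finset.mem_image.mp hi
    obtain ⟨hlo, _⟩ := (Finset.mem_filter.mp htf).2
    rcases Finset.mem_union.mp hiT with hT | hW
    · exact (Finset.mem_compl.mp (hwt ▸ hwmem t)) hT
    · obtain ⟨t', ht'f, hwt'⟩ := Finset.mem_image.mp hW
      have ht'm : (t' : ℕ) < m := (Finset.mem_filter.mp ht'f).2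
      have : t = t' := hwinj (by rw [hwt, hwt'])
      have : (t : ℕ) < m := this ▸ ht'm
      have hmle : m ≤ m + 2 * m * j := Nat.le_add_right _ _
      omega
  -- pointwise decomposition
  have htotal : ∀ i, h i = h1 i + ∑ j ∈ Finset.range N, u j i := by
    intro i
    by_cases hiT : i ∈ T01
    · have hz : ∀ j ∈ Finset.range N, u j i = 0 := by
        intro j _
        rw [hu_def]; dsimp only; rw [restr, if_neg]
        intro hi; exact hSbT01 j i hi hiT
      rw [Finset.sum_eq_zero hz, hh1_def, restr, if_pos hiT, add_zero]
    · have hiT0 : i ∈ T0ᶜ := by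
        rw [Finset.mem_compl]; intro hc
        exact hiT (Finset.mem_union_left _ hc)
      obtain ⟨t, hwt⟩ := hwsurj i hiT0
      have htm : m ≤ (t : ℕ) := by
        by_contra hlt
        exact hiT (Finset.mem_union_right _ (Finset.mem_image.mpr
          ⟨t, Finset.mem_filter.mpr ⟨Finset.mem_univ _, not_le.mp hlt⟩, hwt⟩))
      set j0 := ((t : ℕ) - m) / (2 * m) with hj0_def
      have h2m : 0 < 2 * m := by omega
      have hdm : 2 * m * j0 + ((t : ℕ) - m) % (2 * m) = (t : ℕ) - m := by
        rw [hj0_def]; exact Nat.div_add_mod _ _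
      have hmodlt : ((t : ℕ) - m) % (2 * m) < 2 * m := Nat.mod_lt ((t : ℕ) - m) h2m
      have hj0lo : m + 2 * m * j0 ≤ (t : ℕ) := by omega
      have hj0hi : (t : ℕ) < m + 2 * m * j0 + 2 * m := by omega
      have hj0N : j0 < N := by
        have h1' : j0 ≤ (t : ℕ) - m := Nat.div_le_self _ _
        have := t.isLt
        omega
      have hmem0 : i ∈ Sb j0 := Finset.mem_image.mpr
        ⟨t, Finset.mem_filter.mpr ⟨Finset.mem_univ _, hj0lo, hj0hi⟩, hwt⟩
      have hsum : ∑ j ∈ Finset.range N, u j i = h i := by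
        rw [Finset.sum_eq_single_of_mem j0 (Finset.mem_range.mpr hj0N)]
        · rw [hu_def]; dsimp only; rw [restr, if_pos hmem0]
        · intro j _ hjne
          rw [hu_def]; dsimp only; rw [restr, if_neg]
          intro hi
          obtain ⟨t', ht'f, hwt'⟩ := Finset.mem_image.mp hi
          obtain ⟨hlo, hhi⟩ := (Finset.mem_filter.mp ht'f).2
          have htt' : t' = t := hwinj (by rw [hwt', hwt])
          rw [htt'] at hlo hhi
          have hdj : ((t : ℕ) - m) / (2 * m) = j := by
            have e1 : j * (2 * m) = 2 * m * j := Nat.mul_comm _ _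
            have e2 : (j + 1) * (2 * m) = 2 * m * j + 2 * m := by ring
            refine Nat.div_eq_of_lt_le ?_ ?_
            · rw [e1]; omega
            · rw [e2]; omega
          exact hjne (hj0_def.trans hdj).symm
      rw [hsum, hh1_def, restr, if_neg hiT, zero_add]
  -- cardinalities
  have hW1card : W1.card ≤ m := by
    refine le_trans Finset.card_image_le ?_
    have hc := Finset.card_le_card_of_injOn (fun t : Fin N => (t : ℕ))
      (s := Finset.univ.filter (fun t : Fin N => (t : ℕ) < m)) (t := Finset.range m)
      (fun t ht => Finset.mem_range.mpr (Finset.mem_filter.mp ht).2)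
      (fun t _ t' _ htt => Fin.val_injective htt)
    rwa [Finset.card_range] at hc
  have hT01card : T01.card ≤ 3 * m := by
    refine le_trans (Finset.card_union_le _ _) ?_
    rw [hT0card]; omega
  have hSbcard : ∀ j, (Sb j).card ≤ 2 * m := by
    intro j
    refine le_trans Finset.card_image_le ?_
    have hc := Finset.card_le_card_of_injOn (fun t : Fin N => (t : ℕ))
      (s := Finset.univ.filter (fun t : Fin N =>
        m + 2 * m * j ≤ (t : ℕ) ∧ (t : ℕ) < m + 2 * m * j + 2 * m))
      (t := Finset.Ico (m + 2 * m * j) (m + 2 * m * j + 2 * m))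
      (fun t ht => Finset.mem_Ico.mpr (Finset.mem_filter.mp ht).2)
      (fun t _ t' _ htt => Fin.val_injective htt)
    rwa [Nat.card_Ico, Nat.add_sub_cancel_left] at hc
  -- per-block norms
  have hblock : ∀ j, l2norm (u j) ^ 2
      ≤ (∑ t ∈ Finset.Ico (2 * m * j) (2 * m * j + 2 * m), a t) ^ 2 / (2 * m) := by
    intro j
    have e1 : l2norm (u j) ^ 2 = ∑ i ∈ Sb j, h i ^ 2 := by
      rw [hu_def]; exact l2norm_sq_restr _ _
    have e2 : ∑ i ∈ Sb j, h i ^ 2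
        = ∑ t ∈ Finset.univ.filter (fun t : Fin N =>
            m + 2 * m * j ≤ (t : ℕ) ∧ (t : ℕ) < m + 2 * m * j + 2 * m), h (w t) ^ 2 := by
      rw [hSb_def]
      exact Finset.sum_image fun t _ t' _ htt => hwinj htt
    have e3 : ∑ t ∈ Finset.univ.filter (fun t : Fin N =>
            m + 2 * m * j ≤ (t : ℕ) ∧ (t : ℕ) < m + 2 * m * j + 2 * m), h (w t) ^ 2
        = ∑ t ∈ Finset.univ.filter (fun t : Fin N =>
            m + 2 * m * j ≤ (t : ℕ) ∧ (t : ℕ) < m + 2 * m * j + 2 * m), a (t : ℕ) ^ 2 := by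
      refine Finset.sum_congr rfl fun t _ => ?_
      rw [haval t, sq_abs]
    have e4 : ∑ t ∈ Finset.univ.filter (fun t : Fin N =>
            m + 2 * m * j ≤ (t : ℕ) ∧ (t : ℕ) < m + 2 * m * j + 2 * m), a (t : ℕ) ^ 2
        ≤ ∑ t ∈ Finset.Ico (m + 2 * m * j) (m + 2 * m * j + 2 * m), a t ^ 2 := by
      rw [Finset.sum_filter]
      rw [Fin.sum_univ_eq_sum_range
        (fun t : ℕ => if m + 2 * m * j ≤ t ∧ t < m + 2 * m * j + 2 * m then a t ^ 2 else 0) N]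
      rw [← Finset.sum_filter]
      refine Finset.sum_le_sum_of_subset_of_nonneg ?_ fun t _ _ => sq_nonneg _
      intro t ht
      exact Finset.mem_Ico.mpr (Finset.mem_filter.mp ht).2
    have e5 := shift_lemma a ha hamono m (2 * m * j) hm
    rw [show 2 * m * j + m = m + 2 * m * j from by ring,
      show 2 * m * j + 3 * m = m + 2 * m * j + 2 * m from by ring] at e5
    calc l2norm (u j) ^ 2
        = ∑ t ∈ Finset.univ.filter (fun t : Fin N =>
            m + 2 * m * j ≤ (t : ℕ) ∧ (t : ℕ) < m + 2 * m * j + 2 * m), a (t : ℕ) ^ 2 := by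
          rw [e1, e2, e3]
      _ ≤ ∑ t ∈ Finset.Ico (m + 2 * m * j) (m + 2 * m * j + 2 * m), a t ^ 2 := e4
      _ ≤ (∑ t ∈ Finset.Ico (2 * m * j) (2 * m * j + 2 * m), a t) ^ 2 / (2 * m) := e5
  have h2mpos : (0 : ℝ) < 2 * m := by
    have : (1 : ℝ) ≤ (m : ℝ) := by exact_mod_cast hm
    linarith
  have hsqrt2m : (0 : ℝ) < Real.sqrt (2 * m) := Real.sqrt_pos.mpr h2mpos
  have hblockn : ∀ j, l2norm (u j)
      ≤ (∑ t ∈ Finset.Ico (2 * m * j) (2 * m * j + 2 * m), a t) / Real.sqrt (2 * m) := by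
    intro j
    have hW0 : 0 ≤ ∑ t ∈ Finset.Ico (2 * m * j) (2 * m * j + 2 * m), a t :=
      Finset.sum_nonneg fun t _ => ha t
    have := Real.sqrt_le_sqrt (hblock j)
    rwa [Real.sqrt_sq (l2norm_nonneg _), Real.sqrt_div (sq_nonneg _), Real.sqrt_sq hW0] at this
  -- total block sum
  have hsumW : ∑ j ∈ Finset.range N, ∑ t ∈ Finset.Ico (2 * m * j) (2 * m * j + 2 * m), a t
      = ∑ t ∈ Finset.Ico 0 (2 * m * N), a t := sum_blocks a (2 * m) N
  have htails : ∑ t ∈ Finset.Ico 0 (2 * m * N), a t ≤ ∑ t ∈ Finset.Ico 0 N, a t := by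
    rcases le_or_gt (2 * m * N) N with hc | hc
    · exact Finset.sum_le_sum_of_subset_of_nonneg
        (Finset.Ico_subset_Ico (le_refl 0) hc) fun t _ _ => ha t
    · rw [← Finset.sum_Ico_consecutive a (Nat.zero_le N) (le_of_lt hc)]
      have : ∑ t ∈ Finset.Ico N (2 * m * N), a t = 0 := by
        refine Finset.sum_eq_zero fun t ht => ?_
        have := (Finset.mem_Ico.mp ht).1
        rw [ha_def]; dsimp only; rw [dif_neg (by omega)]
      rw [this, add_zero]
  have himg : Finset.univ.image w = T0ᶜ := by
    ext i
    constructor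
    · intro hi
      obtain ⟨t, _, hwt⟩ := Finset.mem_image.mp hi
      exact hwt ▸ hwmem t
    · intro hi
      obtain ⟨t, hwt⟩ := hwsurj i hi
      exact Finset.mem_image.mpr ⟨t, Finset.mem_univ _, hwt⟩
  have hIcoN : ∑ t ∈ Finset.Ico 0 N, a t = ∑ i ∈ T0ᶜ, |h i| := by
    rw [← Finset.range_eq_Ico, ← Fin.sum_univ_eq_sum_range a N]
    rw [Finset.sum_congr rfl fun t (_ : t ∈ Finset.univ) => haval t]
    rw [← himg, Finset.sum_image fun t _ t' _ htt => hwinj htt]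
  -- ℓ1 comparison on T0
  have hl1T0 : ∑ i ∈ T0, |h i| ≤ Real.sqrt (2 * m) * l2norm (restr T0 h) := by
    have hz : ∀ i ∉ T0, restr T0 h i = 0 := fun i hi => if_neg hi
    have := sum_abs_le_sqrt_card T0 (restr T0 h) hz
    have hl1 : l1norm (restr T0 h) = ∑ i ∈ T0, |h i| := by
      rw [l1norm]
      have : ∀ i, |restr T0 h i| = if i ∈ T0 then |h i| else 0 := by
        intro i; rw [restr]; split <;> simp
      rw [Finset.sum_congr rfl fun i _ => this i, Finset.sum_ite_mem, Finset.univ_inter]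
    rw [hl1] at this
    refine this.trans ?_
    refine mul_le_mul_of_nonneg_right ?_ (l2norm_nonneg _)
    refine Real.sqrt_le_sqrt ?_
    rw [hT0card]; push_cast; exact le_refl _
  have hrestrT0 : l2norm (restr T0 h) ≤ l2norm h1 := by
    rw [hh1_def]; exact l2norm_restr_mono h Finset.subset_union_left
  -- total block-ℓ2 bound
  have hWle : ∑ j ∈ Finset.range N, l2norm (u j) ≤ l2norm h1 := by
    calc ∑ j ∈ Finset.range N, l2norm (u j)
        ≤ ∑ j ∈ Finset.range N,
            (∑ t ∈ Finset.Ico (2 * m * j) (2 * m * j + 2 * m), a t) / Real.sqrt (2 * m) :=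
          Finset.sum_le_sum fun j _ => hblockn j
      _ = (∑ t ∈ Finset.Ico 0 (2 * m * N), a t) / Real.sqrt (2 * m) := by
          rw [← Finset.sum_div, hsumW]
      _ ≤ (∑ i ∈ T0, |h i|) / Real.sqrt (2 * m) := by
          gcongr
          exact le_trans (le_trans htails (le_of_eq hIcoN)) hcone
      _ ≤ (Real.sqrt (2 * m) * l2norm (restr T0 h)) / Real.sqrt (2 * m) := by
          gcongr
      _ = l2norm (restr T0 h) := by
          rw [mul_comm, mul_div_assoc, div_self (ne_of_gt hsqrt2m), mul_one]
      _ ≤ l2norm h1 := hrestrT0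
  -- sparsity facts
  have hh1sp : IsSparse (3 * m) h1 := by rw [hh1_def]; exact restr_sparse _ _ hT01card
  have husp : ∀ j, IsSparse (2 * m) (u j) := fun j => by
    rw [hu_def]; exact restr_sparse _ _ (hSbcard j)
  -- mulVec decomposition
  have hFh : ∀ i, F.mulVec h i = F.mulVec h1 i + ∑ j ∈ Finset.range N, F.mulVec (u j) i := by
    intro i
    simp only [Matrix.mulVec, dotProduct]
    have hterm : ∀ l, F i l * h l = F i l * h1 l + ∑ j ∈ Finset.range N, F i l * u j l := by
      intro l; rw [htotal l, mul_add, Finset.mul_sum]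
    rw [Finset.sum_congr rfl fun l _ => hterm l, Finset.sum_add_distrib]
    congr 1
    exact Finset.sum_comm
  have hipdec : ip (F.mulVec h1) (F.mulVec h)
      = ip (F.mulVec h1) (F.mulVec h1)
        + ∑ j ∈ Finset.range N, ip (F.mulVec h1) (F.mulVec (u j)) := by
    simp only [ip]
    have hterm : ∀ i : Fin n, F.mulVec h1 i * F.mulVec h i
        = F.mulVec h1 i * F.mulVec h1 i
          + ∑ j ∈ Finset.range N, F.mulVec h1 i * F.mulVec (u j) i := by
      intro i; rw [hFh i, mul_add, Finset.mul_sum]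
    rw [Finset.sum_congr rfl fun i _ => hterm i, Finset.sum_add_distrib]
    congr 1
    exact Finset.sum_comm
  -- correlation bound
  have hcorr1 : |ip (F.mulVec h1) (F.mulVec h)| ≤ 2 * lam * (Real.sqrt (3 * m) * l2norm h1) := by
    rw [ip_mulVec_left]
    calc |∑ j', h1 j' * ∑ i, F i j' * F.mulVec h i|
        ≤ ∑ j', |h1 j' * ∑ i, F i j' * F.mulVec h i| := Finset.abs_sum_le_sum_abs _ _
      _ ≤ ∑ j', |h1 j'| * (2 * lam) := by
          refine Finset.sum_le_sum fun j' _ => ?_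
          rw [abs_mul]
          exact mul_le_mul_of_nonneg_left (hcorr j') (abs_nonneg _)
      _ = 2 * lam * l1norm h1 := by rw [l1norm, ← Finset.sum_mul]; ring
      _ ≤ 2 * lam * (Real.sqrt (3 * m) * l2norm h1) := by
          refine mul_le_mul_of_nonneg_left ?_ (by linarith : (0:ℝ) ≤ 2 * lam)
          have hz : ∀ i ∉ T01, h1 i = 0 := by
            intro i hi; rw [hh1_def, restr, if_neg hi]
          refine (sum_abs_le_sqrt_card T01 h1 hz).trans
            (mul_le_mul_of_nonneg_right ?_ (l2norm_nonneg _))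
          refine Real.sqrt_le_sqrt ?_
          exact_mod_cast hT01card
  -- cross terms
  have hcross : ∀ j ∈ Finset.range N,
      |ip (F.mulVec h1) (F.mulVec (u j))| ≤ θ * (l2norm (u j) * l2norm h1) := by
    intro j _
    rw [ip_comm]
    refine hθ (u j) h1 (husp j) hh1sp ?_
    intro i
    by_cases hi : i ∈ Sb j
    · right; rw [hh1_def, restr, if_neg (hSbT01 j i hi)]
    · left; rw [hu_def]; dsimp only; rw [restr, if_neg hi]
  -- RIP lower bound
  have hlow : (1 - δ) * l2norm h1 ^ 2 ≤ ip (F.mulVec h1) (F.mulVec h1) := by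
    rw [ip_self]
    rcases le_or_gt (1 - δ) 0 with hcase | hcase
    · nlinarith [sq_nonneg (l2norm h1), sq_nonneg (l2norm (F.mulVec h1))]
    · have h5 := hδ h1 hh1sp
      have h6 := mul_self_le_mul_self
        (mul_nonneg (Real.sqrt_nonneg _) (l2norm_nonneg _)) h5
      have key : (Real.sqrt (1 - δ) * l2norm h1) * (Real.sqrt (1 - δ) * l2norm h1)
          = (1 - δ) * l2norm h1 ^ 2 := by
        rw [show (Real.sqrt (1 - δ) * l2norm h1) * (Real.sqrt (1 - δ) * l2norm h1)
          = (Real.sqrt (1 - δ) * Real.sqrt (1 - δ)) * (l2norm h1 * l2norm h1) from by ring,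
          Real.mul_self_sqrt (le_of_lt hcase), ← pow_two]
      rw [← key]
      calc (Real.sqrt (1 - δ) * l2norm h1) * (Real.sqrt (1 - δ) * l2norm h1)
          ≤ l2norm (F.mulVec h1) * l2norm (F.mulVec h1) := h6
        _ = l2norm (F.mulVec h1) ^ 2 := (pow_two _).symm
  -- assemble the chain
  have habs1 : ip (F.mulVec h1) (F.mulVec h) ≤ 2 * lam * (Real.sqrt (3 * m) * l2norm h1) :=
    le_trans (le_abs_self _) hcorr1
  have habs2 : -(∑ j ∈ Finset.range N, ip (F.mulVec h1) (F.mulVec (u j)))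
      ≤ θ * l2norm h1 ^ 2 := by
    calc -(∑ j ∈ Finset.range N, ip (F.mulVec h1) (F.mulVec (u j)))
        = ∑ j ∈ Finset.range N, -(ip (F.mulVec h1) (F.mulVec (u j))) := by
          rw [Finset.sum_neg_distrib]
      _ ≤ ∑ j ∈ Finset.range N, |ip (F.mulVec h1) (F.mulVec (u j))| :=
          Finset.sum_le_sum fun j _ => neg_le_abs _
      _ ≤ ∑ j ∈ Finset.range N, θ * (l2norm (u j) * l2norm h1) :=
          Finset.sum_le_sum hcross
      _ = (θ * l2norm h1) * ∑ j ∈ Finset.range N, l2norm (u j) := by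
          rw [Finset.mul_sum]
          exact Finset.sum_congr rfl fun j _ => by ring
      _ ≤ (θ * l2norm h1) * l2norm h1 :=
          mul_le_mul_of_nonneg_left hWle (mul_nonneg hθnn (l2norm_nonneg _))
      _ = θ * l2norm h1 ^ 2 := by ring
  have hchain : (1 - δ - θ) * l2norm h1 ^ 2 ≤ 2 * lam * (Real.sqrt (3 * m) * l2norm h1) := by
    have e := hipdec
    linarith [hlow, habs1, habs2]
  -- conclude
  rcases eq_or_lt_of_le (l2norm_nonneg h1) with hA0 | hApos
  · -- degenerate: h = 0
    have hsumT01 : ∑ i ∈ T01, h i ^ 2 = 0 := by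
      rw [← l2norm_sq_restr T01 h, ← hh1_def, ← hA0]
      norm_num
    have hh1zero : ∀ i ∈ T01, h i = 0 := by
      intro i hi
      have := (Finset.sum_eq_zero_iff_of_nonneg fun i _ => sq_nonneg (h i)).mp hsumT01 i hi
      exact pow_eq_zero_iff (by norm_num) |>.mp this
    have hT0z : ∑ i ∈ T0, |h i| = 0 :=
      Finset.sum_eq_zero fun i hi =>
        abs_eq_zero.mpr (hh1zero i (Finset.mem_union_left _ hi))
    have hall : ∀ i, h i = 0 := by
      intro i
      by_cases hi : i ∈ T0
      · exact hh1zero i (Finset.mem_union_left _ hi)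
      · have h0 : ∑ i ∈ T0ᶜ, |h i| ≤ 0 := hT0z ▸ hcone
        have h1i : |h i| ≤ 0 :=
          le_trans (Finset.single_le_sum (fun i _ => abs_nonneg (h i))
            (Finset.mem_compl.mpr hi)) h0
        exact abs_eq_zero.mp (le_antisymm h1i (abs_nonneg _))
    have hzero : l2norm h = 0 := by
      rw [l2norm, Finset.sum_eq_zero fun i _ => by rw [hall i]; norm_num, Real.sqrt_zero]
    rw [hzero]
    apply mul_nonneg (mul_nonneg (div_nonneg (by positivity) (le_of_lt hdtpos))
      (Real.sqrt_nonneg _)) hlam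
  · have hA1 : (1 - δ - θ) * l2norm h1 ≤ 2 * lam * Real.sqrt (3 * m) := by
      have h2 : (1 - δ - θ) * l2norm h1 * l2norm h1
          ≤ (2 * lam * Real.sqrt (3 * m)) * l2norm h1 := by
        calc (1 - δ - θ) * l2norm h1 * l2norm h1 = (1 - δ - θ) * l2norm h1 ^ 2 := by ring
          _ ≤ 2 * lam * (Real.sqrt (3 * m) * l2norm h1) := hchain
          _ = (2 * lam * Real.sqrt (3 * m)) * l2norm h1 := by ring
      exact le_of_mul_le_mul_right h2 hApos
    have htailn : l2norm (fun i => h i - h1 i) ≤ l2norm h1 := by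
      have heq : (fun i => h i - h1 i) = fun i => ∑ j ∈ Finset.range N, u j i := by
        funext i; rw [htotal i]; ring
      rw [heq]
      exact (l2norm_sum_le (Finset.range N) u).trans hWle
    have hsplit : l2norm h ^ 2 = l2norm h1 ^ 2 + l2norm (fun i => h i - h1 i) ^ 2 := by
      rw [l2norm_sq, l2norm_sq, l2norm_sq]
      have hterm : ∀ i, h i ^ 2 = h1 i ^ 2 + (h i - h1 i) ^ 2 := by
        intro i
        by_cases hi : i ∈ T01
        · rw [hh1_def, restr, if_pos hi]; ring
        · rw [hh1_def, restr, if_neg hi]; ring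
      rw [Finset.sum_congr rfl fun i _ => hterm i, Finset.sum_add_distrib]
    have hfinal2 : l2norm h ^ 2 ≤ 2 * l2norm h1 ^ 2 := by
      nlinarith [htailn, l2norm_nonneg h1, l2norm_nonneg (fun i => h i - h1 i)]
    have hsqrt2A : l2norm h ≤ Real.sqrt 2 * l2norm h1 := by
      have h7 := Real.sqrt_le_sqrt hfinal2
      rwa [Real.sqrt_sq (l2norm_nonneg h),
        Real.sqrt_mul (by norm_num : (0:ℝ) ≤ 2), Real.sqrt_sq (l2norm_nonneg h1)] at h7
    have hAbound : l2norm h1 ≤ 2 * lam * Real.sqrt (3 * m) / (1 - δ - θ) := by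
      rw [le_div_iff₀ hdtpos]
      linarith [hA1]
    calc l2norm h ≤ Real.sqrt 2 * l2norm h1 := hsqrt2A
      _ ≤ Real.sqrt 2 * (2 * lam * Real.sqrt (3 * m) / (1 - δ - θ)) :=
          mul_le_mul_of_nonneg_left hAbound (Real.sqrt_nonneg _)
      _ = 2 * Real.sqrt 3 / (1 - δ - θ) * Real.sqrt (2 * m) * lam := by
          rw [Real.sqrt_mul (by norm_num : (0:ℝ) ≤ 3),
            Real.sqrt_mul (by norm_num : (0:ℝ) ≤ 2)]
          field_simp



end DSaux

/-- Dantzig selector with bounded-correlation noise for `k`-sparse `β`. -/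
theorem dantzig_selector_error_sparse {n p m : ℕ} (F : Matrix (Fin n) (Fin p) ℝ)
    (hm : 1 ≤ m) (hp : 5 * m ≤ p)
    (hcond : ripConst F (3 * m) + roConst F (2 * m) (3 * m) < 1)
    (β : Fin p → ℝ) (hβ : IsSparse (2 * m) β)
    (z : Fin n → ℝ) (y : Fin n → ℝ) (hy : y = fun i => F.mulVec β i + z i)
    (lam : ℝ) (hlam : 0 ≤ lam)
    (hz : ∀ j, |(Matrix.transpose F).mulVec z j| ≤ lam)
    (βhat : Fin p → ℝ)
    (hfeas : ∀ j, |(Matrix.transpose F).mulVec (fun i => y i - F.mulVec βhat i) j| ≤ lam)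
    (hmin : ∀ γ : Fin p → ℝ,
      (∀ j, |(Matrix.transpose F).mulVec (fun i => y i - F.mulVec γ i) j| ≤ lam) →
      l1norm βhat ≤ l1norm γ) :
    l2norm (fun i => βhat i - β i) ≤
      (2 * Real.sqrt 3 / (1 - ripConst F (3 * m) - roConst F (2 * m) (3 * m))) *
        Real.sqrt (2 * m) * lam := by
  classical
  have hp0 : 0 < p := by omega
  have hp2 : 2 ≤ p := by omega
  have hδspec := DSaux.ripConst_spec F (k := 3 * m) hp0 (by omega)
  have hθspec := DSaux.roConst_spec F (k := 2 * m) (k' := 3 * m) hp2 (by omega) (by omega)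
  have hθnn := DSaux.roConst_nonneg F (k := 2 * m) (k' := 3 * m) hp2 (by omega) (by omega)
  set h : Fin p → ℝ := fun i => βhat i - β i with hh_def
  obtain ⟨s, hscard, hssupp⟩ := hβ
  obtain ⟨T0, hsT0, hT0card⟩ := Finset.exists_superset_card_eq hscard
    (by rw [Fintype.card_fin]; omega)
  -- β is feasible
  have hβfeas : ∀ j, |(Matrix.transpose F).mulVec (fun i => y i - F.mulVec β i) j| ≤ lam := by
    intro j
    have he : (fun i => y i - F.mulVec β i) = z := by
      funext i; rw [hy]; ring
    rw [he]; exact hz j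
  have hl1 : l1norm βhat ≤ l1norm β := hmin β hβfeas
  have hβz : ∀ i ∉ T0, β i = 0 := fun i hi => hssupp i (fun hmem => hi (hsT0 hmem))
  -- cone condition
  have hcone : ∑ i ∈ T0ᶜ, |h i| ≤ ∑ i ∈ T0, |h i| := by
    have e1 : l1norm β = ∑ i ∈ T0, |β i| := by
      rw [l1norm, ← Finset.sum_subset (Finset.subset_univ T0)]
      intro i _ hi; rw [hβz i hi, abs_zero]
    have e2 : l1norm βhat = ∑ i ∈ T0, |βhat i| + ∑ i ∈ T0ᶜ, |βhat i| := by
      rw [l1norm, Finset.sum_add_sum_compl T0]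
    have e3 : ∀ i ∈ T0ᶜ, |βhat i| = |h i| := by
      intro i hi
      show |βhat i| = |βhat i - β i|
      rw [hβz i (Finset.mem_compl.mp hi), sub_zero]
    have key : ∑ i ∈ T0ᶜ, |h i| ≤ ∑ i ∈ T0, (|β i| - |βhat i|) := by
      have h4 := hl1
      rw [e2, e1, Finset.sum_congr rfl e3] at h4
      rw [Finset.sum_sub_distrib]
      linarith
    refine key.trans (Finset.sum_le_sum fun i _ => ?_)
    calc |β i| - |βhat i| ≤ |β i - βhat i| := abs_sub_abs_le_abs_sub _ _
      _ = |h i| := by show |β i - βhat i| = |βhat i - β i|; rw [abs_sub_comm]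
  -- correlation bound on h
  have hcorr : ∀ j : Fin p, |∑ i, F i j * F.mulVec h i| ≤ 2 * lam := by
    intro j
    have hsub : (fun i' => βhat i' - β i') = βhat - β := rfl
    have hminus : ∀ i, y i - F.mulVec βhat i = z i - F.mulVec h i := by
      intro i
      have hmv : F.mulVec h i = F.mulVec βhat i - F.mulVec β i := by
        have h3 : F.mulVec h = F.mulVec (βhat - β) := rfl
        rw [h3, Matrix.mulVec_sub, Pi.sub_apply]
      simp only [hy]
      rw [hmv]; ring
    have hT : (Matrix.transpose F).mulVec (fun i => y i - F.mulVec βhat i) j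
        = ∑ i, F i j * (z i - F.mulVec h i) := by
      rw [DSaux.transpose_mulVec_apply]
      refine Finset.sum_congr rfl fun i _ => ?_
      show F i j * (y i - F.mulVec βhat i) = F i j * (z i - F.mulVec h i)
      rw [hminus i]
    have hzT : (Matrix.transpose F).mulVec z j = ∑ i, F i j * z i :=
      DSaux.transpose_mulVec_apply F z j
    have hsplit : ∑ i, F i j * F.mulVec h i
        = (∑ i, F i j * z i) - ∑ i, F i j * (z i - F.mulVec h i) := by
      rw [← Finset.sum_sub_distrib]
      exact Finset.sum_congr rfl fun i _ => by ring
    rw [hsplit]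
    have h1 := hz j; rw [hzT] at h1
    have h2 := hfeas j; rw [hT] at h2
    calc |(∑ i, F i j * z i) - ∑ i, F i j * (z i - F.mulVec h i)|
        ≤ |∑ i, F i j * z i| + |∑ i, F i j * (z i - F.mulVec h i)| := abs_sub _ _
      _ ≤ lam + lam := add_le_add h1 h2
      _ = 2 * lam := by ring
  exact DSaux.core F hm hp (ripConst F (3 * m)) (roConst F (2 * m) (3 * m)) lam hlam
    (by linarith) hθnn (fun c hc => (hδspec c hc).1)
    (fun c c' hc hc' hd => hθspec c c' hc hc' hd)
    h T0 hT0card hcone hcorr
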